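/- Let (Ā, b̄) ∈ ℝ^{m×n} × ℝᵐ with F(Ā,b̄) ≠ ∅ and fix x ∈ ℝⁿ. Then the distance from (Ā,b̄) to F⁻¹(x) = {(A,b) : Ax ≤ b} equals ‖(Āx − b̄)₊‖_∞ / (‖x‖ + 1), where the parameter space ℝ^{m×n} × ℝᵐ is endowed with the norm ‖(A,b)‖ = max_t max{‖a_t‖_*, |b_t|}. -/

import Mathlib

open Metric

/-- Distance formula from a nominal parameter `(Ā, b̄)` to the set of parameters
making a fixed point `x` feasible, under full perturbations.  The space of
variables is a finite-dimensional real normed space `E` with an arbitrary norm;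
the rows of the matrix are viewed as continuous linear functionals on `E`
(whose operator norm is the dual norm), and the parameter space carries the norm
`‖(A,b)‖ = max_t max {‖a_t‖_*, |b_t|}`. -/
theorem stmt1 {E : Type*} [NormedAddCommGroup E] [NormedSpace ℝ E]
    [FiniteDimensional ℝ E] {m : ℕ} [NeZero m]
    (Abar : Fin m → (E →L[ℝ] ℝ)) (bbar : Fin m → ℝ)
    (hdom : ∃ z : E, ∀ t, Abar t z ≤ bbar t) (x : E) :
    sInf {d : ℝ | ∃ (A : Fin m → (E →L[ℝ] ℝ)) (b : Fin m → ℝ),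
        (∀ t, A t x ≤ b t) ∧
        d = ⨆ t : Fin m, max ‖Abar t - A t‖ |bbar t - b t|} =
      (⨆ t : Fin m, max (Abar t x - bbar t) 0) / (‖x‖ + 1) := by
  classical
  set k : ℝ := ‖x‖ + 1 with hk
  have hkpos : 0 < k := by positivity
  set r : Fin m → ℝ := fun t => max (Abar t x - bbar t) 0 with hr
  set R : ℝ := ⨆ t : Fin m, r t with hR
  -- dual vector
  obtain ⟨u, hu1, hux⟩ : ∃ u : E →L[ℝ] ℝ, ‖u‖ ≤ 1 ∧ u x = ‖x‖ := by
    rcases eq_or_ne x 0 with rfl | hx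
    · exact ⟨0, by simp, by simp⟩
    · obtain ⟨g, hg, hgx⟩ := exists_dual_vector ℝ x (norm_ne_zero_iff.mpr hx)
      exact ⟨g, le_of_eq hg, by exact_mod_cast hgx⟩
  have hrnn : ∀ t, 0 ≤ r t := fun t => le_max_right _ _
  -- the candidate achieving the infimum
  have hmem : R / k ∈ {d : ℝ | ∃ (A : Fin m → (E →L[ℝ] ℝ)) (b : Fin m → ℝ),
      (∀ t, A t x ≤ b t) ∧
      d = ⨆ t : Fin m, max ‖Abar t - A t‖ |bbar t - b t|} := by
    refine ⟨fun t => Abar t - (r t / k) • u, fun t => bbar t + r t / k, ?_, ?_⟩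
    · intro t
      have h1 : (Abar t - (r t / k) • u) x = Abar t x - (r t / k) * ‖x‖ := by
        simp [hux]
      rw [h1]
      have h2 : Abar t x - bbar t ≤ r t := le_max_left _ _
      have : (r t / k) * ‖x‖ + r t / k = r t := by
        field_simp
        ring
      nlinarith [this]
    · have hterm : ∀ t, max ‖Abar t - (Abar t - (r t / k) • u)‖
          |bbar t - (bbar t + r t / k)| = r t / k := by
        intro t
        have h1 : Abar t - (Abar t - (r t / k) • u) = (r t / k) • u := by abel
        have h2 : ‖(r t / k) • u‖ = (r t / k) * ‖u‖ := by
          have h0 := norm_smul (α := ℝ) (β := E →L[ℝ] ℝ) (r t / k) u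
          rw [h0, Real.norm_eq_abs, abs_of_nonneg (div_nonneg (hrnn t) hkpos.le)]
        have h3 : (r t / k) * ‖u‖ ≤ r t / k := by
          nlinarith [div_nonneg (hrnn t) hkpos.le]
        have h4 : |bbar t - (bbar t + r t / k)| = r t / k := by
          rw [abs_sub_comm]
          simp [abs_of_nonneg (div_nonneg (hrnn t) hkpos.le)]
        rw [h1, h2, h4, max_eq_right h3]
      simp only [hterm]
      -- ⨆ t, r t / k = R / k
      refine le_antisymm (div_le_iff₀ hkpos |>.mpr ?_) ?_
      · calc R = ⨆ t, r t := rfl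
          _ ≤ (⨆ t, r t / k) * k := by
              refine ciSup_le fun t => ?_
              have := le_ciSup (Finite.bddAbove_range fun t => r t / k) t
              calc r t = (r t / k) * k := by field_simp
                _ ≤ (⨆ t, r t / k) * k := by nlinarith [this]
      · refine ciSup_le fun t => ?_
        gcongr
        exact le_ciSup (Finite.bddAbove_range r) t
  -- lower bound
  have hlb : ∀ d ∈ {d : ℝ | ∃ (A : Fin m → (E →L[ℝ] ℝ)) (b : Fin m → ℝ),
      (∀ t, A t x ≤ b t) ∧
      d = ⨆ t : Fin m, max ‖Abar t - A t‖ |bbar t - b t|}, R / k ≤ d := by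
    rintro d ⟨A, b, hfeas, rfl⟩
    set D : Fin m → ℝ := fun t => max ‖Abar t - A t‖ |bbar t - b t| with hD
    have hDnn : ∀ t, 0 ≤ D t := fun t => le_trans (norm_nonneg _) (le_max_left _ _)
    have t0 : Fin m := ⟨0, Nat.pos_of_ne_zero (NeZero.ne m)⟩
    have hdnn : 0 ≤ ⨆ t, D t :=
      le_trans (hDnn t0) (le_ciSup (Finite.bddAbove_range D) t0)
    rw [div_le_iff₀ hkpos]
    refine ciSup_le fun t => ?_
    refine max_le ?_ (by nlinarith)
    have hDt : D t ≤ ⨆ t, D t := le_ciSup (Finite.bddAbove_range D) t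
    have h1 : (Abar t - A t) x ≤ ‖Abar t - A t‖ * ‖x‖ := by
      calc (Abar t - A t) x ≤ |(Abar t - A t) x| := le_abs_self _
        _ ≤ ‖Abar t - A t‖ * ‖x‖ := (Abar t - A t).le_opNorm x
    have h2 : b t - bbar t ≤ |bbar t - b t| := by
      rw [abs_sub_comm]; exact le_abs_self _
    have h3 : ‖Abar t - A t‖ ≤ D t := le_max_left _ _
    have h4 : |bbar t - b t| ≤ D t := le_max_right _ _
    have h5 : (Abar t - A t) x = Abar t x - A t x := by simp
    have h6 : A t x ≤ b t := hfeas t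
    nlinarith [norm_nonneg x]
  exact le_antisymm (csInf_le ⟨R / k, hlb⟩ hmem) (le_csInf ⟨R / k, hmem⟩ hlb)
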